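/- arXiv:0911.1748 — 3 statements merged into one kernel-verified Lean document; each statement's English description precedes it below -/
import Mathlib

section
/- Let X be a topological space with a basis 𝒯 of open sets such that every element of 𝒯 is Lindelöf and 𝒯 is stable under finite unions and intersections. Let k be a field and let 0 → F' → F → F'' → 0 be a short exact sequence of sheaves of k-vector spaces on X with F' 𝒯-flabby (i.e., for all U, V ∈ 𝒯 with V ⊆ U the restriction Γ(U;F') → Γ(V;F') is surjective). Then for every open Lindelöf subset U of X, the map Γ(U;F) → Γ(U;F'') is surjective. -/
open CategoryTheory TopologicalSpace Opposite

/-- A subset is Lindelöf: every open cover has a countable subcover. -/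
def LindelofSet {X : Type} [TopologicalSpace X] (s : Set X) : Prop :=
  ∀ 𝒰 : Set (Set X), (∀ u ∈ 𝒰, IsOpen u) → s ⊆ ⋃₀ 𝒰 →
    ∃ 𝒱 ⊆ 𝒰, 𝒱.Countable ∧ s ⊆ ⋃₀ 𝒱

/-- A sheaf is `𝒯`-flabby if restrictions between nested members of `𝒯` are surjective. -/
def TFlabby {k : Type} [Field k] {X : TopCat.{0}} (𝒯 : Set (Opens X))
    (F : TopCat.Sheaf (ModuleCat.{0} k) X) : Prop :=
  ∀ U ∈ 𝒯, ∀ V ∈ 𝒯, ∀ h : V ≤ U, Function.Surjective (F.val.map (homOfLE h).op)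

namespace StmtAux

variable {k : Type} [Field k] {X : TopCat.{0}}

lemma res_res (G : TopCat.Sheaf (ModuleCat.{0} k) X) {A B C : Opens X}
    (h1 : A ≤ B) (h2 : B ≤ C) (x : G.val.obj (op C)) :
    G.val.map (homOfLE h1).op (G.val.map (homOfLE h2).op x)
      = G.val.map (homOfLE (h1.trans h2)).op x := by
  have := ConcreteCategory.congr_hom
    (G.val.map_comp (homOfLE h2).op (homOfLE h1).op) x
  rw [ConcreteCategory.comp_apply] at this
  exact this.symm.trans rfl

lemma res_naturality {G H : TopCat.Sheaf (ModuleCat.{0} k) X} (f : G ⟶ H) {A B : Opens X}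
    (h : A ≤ B) (x : G.val.obj (op B)) :
    f.hom.app (op A) (G.val.map (homOfLE h).op x)
      = H.val.map (homOfLE h).op (f.hom.app (op B) x) := by
  have := ConcreteCategory.congr_hom (f.hom.naturality (homOfLE h).op) x
  simp only [ConcreteCategory.comp_apply] at this
  exact this

-- defeq wrappers around mathlib stalk/gluing API, in LinearMap-coercion normal form

lemma my_stalk_map_germ {G H : TopCat.Sheaf (ModuleCat.{0} k) X} (f : G ⟶ H)
    (V : Opens X) (x : X) (hx : x ∈ V) (s : G.val.obj (op V)) :
    ((TopCat.Presheaf.stalkFunctor (ModuleCat k) x).map f.hom)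
        (TopCat.Presheaf.germ G.val V x hx s)
      = TopCat.Presheaf.germ H.val V x hx (f.hom.app (op V) s) :=
  TopCat.Presheaf.stalkFunctor_map_germ_apply V x hx f.hom s

lemma my_germ_exist (G : TopCat.Sheaf (ModuleCat.{0} k) X) (x : X)
    (t : ↑(TopCat.Presheaf.stalk G.val x)) :
    ∃ (W : Opens X) (m : x ∈ W) (s : G.val.obj (op W)),
      TopCat.Presheaf.germ G.val W x m s = t := by
  exact TopCat.Presheaf.germ_exist G.val t

lemma my_germ_eq (G : TopCat.Sheaf (ModuleCat.{0} k) X) {U V : Opens X} (x : X)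
    (mU : x ∈ U) (mV : x ∈ V) (s : G.val.obj (op U)) (t : G.val.obj (op V))
    (h : TopCat.Presheaf.germ G.val U x mU s = TopCat.Presheaf.germ G.val V x mV t) :
    ∃ (W : Opens X) (m : x ∈ W) (hWU : W ≤ U) (hWV : W ≤ V),
      G.val.map (homOfLE hWU).op s = G.val.map (homOfLE hWV).op t := by
  obtain ⟨W, m, iU, iV, he⟩ := TopCat.Presheaf.germ_eq G.val x mU mV s t h
  exact ⟨W, m, iU.le, iV.le, he⟩

lemma my_section_ext (G : TopCat.Sheaf (ModuleCat.{0} k) X) (V : Opens X)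
    (s t : G.val.obj (op V))
    (h : ∀ (x : X) (hx : x ∈ V),
      TopCat.Presheaf.germ G.val V x hx s = TopCat.Presheaf.germ G.val V x hx t) :
    s = t :=
  TopCat.Presheaf.section_ext G V s t h

lemma my_locality (G : TopCat.Sheaf (ModuleCat.{0} k) X) {ι : Type}
    (W : ι → Opens X) (V : Opens X) (hWV : ∀ i, W i ≤ V) (hcover : V ≤ iSup W)
    (s t : G.val.obj (op V))
    (h : ∀ i, G.val.map (homOfLE (hWV i)).op s = G.val.map (homOfLE (hWV i)).op t) :
    s = t :=
  G.eq_of_locally_eq' W V (fun i => homOfLE (hWV i)) hcover s t h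

lemma my_glue (G : TopCat.Sheaf (ModuleCat.{0} k) X) {ι : Type}
    (W : ι → Opens X) (V : Opens X) (hWV : ∀ i, W i ≤ V) (hcover : V ≤ iSup W)
    (sf : ∀ i, G.val.obj (op (W i)))
    (hcomp : ∀ i j, G.val.map (homOfLE (inf_le_left : W i ⊓ W j ≤ W i)).op (sf i)
      = G.val.map (homOfLE (inf_le_right : W i ⊓ W j ≤ W j)).op (sf j)) :
    ∃ s : G.val.obj (op V), ∀ i, G.val.map (homOfLE (hWV i)).op s = sf i := by
  obtain ⟨s, hs, -⟩ := G.existsUnique_gluing' W V (fun i => homOfLE (hWV i)) hcover sf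
    (fun i j => hcomp i j)
  exact ⟨s, hs⟩

lemma my_app_injective {G H : TopCat.Sheaf (ModuleCat.{0} k) X} (f : G ⟶ H)
    (hinj : ∀ x : ↑X,
      Function.Injective ((TopCat.Presheaf.stalkFunctor (ModuleCat k) x).map f.hom))
    (V : Opens X) : Function.Injective (f.hom.app (op V)) :=
  TopCat.Presheaf.app_injective_of_stalkFunctor_map_injective f.hom V fun x _ => hinj x


variable (F' F F'' : TopCat.Sheaf (ModuleCat.{0} k) X) (α : F' ⟶ F) (β : F ⟶ F'')

lemma beta_alpha_zero
    (hexact : ∀ x : ↑X,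
      LinearMap.range ((TopCat.Presheaf.stalkFunctor (ModuleCat k) x).map α.hom).hom
        = LinearMap.ker ((TopCat.Presheaf.stalkFunctor (ModuleCat k) x).map β.hom).hom)
    (V : Opens X) (y : F'.val.obj (op V)) :
    β.hom.app (op V) (α.hom.app (op V) y) = 0 := by
  apply my_section_ext F'' V
  intro x hx
  rw [map_zero, ← my_stalk_map_germ β V x hx, ← my_stalk_map_germ α V x hx]
  have hk : ((TopCat.Presheaf.stalkFunctor (ModuleCat k) x).map α.hom)
      (TopCat.Presheaf.germ F'.val V x hx y) ∈
      LinearMap.ker ((TopCat.Presheaf.stalkFunctor (ModuleCat k) x).map β.hom).hom := by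
    rw [← hexact x]; exact ⟨_, rfl⟩
  exact hk

lemma sections_exact
    (hinj : ∀ x : ↑X,
      Function.Injective ((TopCat.Presheaf.stalkFunctor (ModuleCat k) x).map α.hom))
    (hexact : ∀ x : ↑X,
      LinearMap.range ((TopCat.Presheaf.stalkFunctor (ModuleCat k) x).map α.hom).hom
        = LinearMap.ker ((TopCat.Presheaf.stalkFunctor (ModuleCat k) x).map β.hom).hom)
    (V : Opens X) (t : F.val.obj (op V)) (ht : β.hom.app (op V) t = 0) :
    ∃ s, α.hom.app (op V) s = t := by
  have key : ∀ x : V, ∃ (W : Opens X) (_ : (x : X) ∈ W) (hWV : W ≤ V)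
      (s : F'.val.obj (op W)),
      α.hom.app (op W) s = F.val.map (homOfLE hWV).op t := by
    rintro ⟨x, hx⟩
    have hker : TopCat.Presheaf.germ F.val V x hx t ∈
        LinearMap.ker ((TopCat.Presheaf.stalkFunctor (ModuleCat k) x).map β.hom).hom := by
      exact (my_stalk_map_germ β V x hx t).trans (by rw [ht, map_zero]; rfl)
    rw [← hexact x] at hker
    obtain ⟨σ, hσ⟩ := hker
    obtain ⟨W₀, m₀, s₀, rfl⟩ := my_germ_exist F' x σ
    rw [my_stalk_map_germ α W₀ x m₀ s₀] at hσ
    obtain ⟨W, m, hWU, hWV, he⟩ := my_germ_eq F x m₀ hx _ _ hσ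
    refine ⟨W, m, hWV, F'.val.map (homOfLE hWU).op s₀, ?_⟩
    rw [res_naturality α hWU s₀]
    exact he
  choose W m hWV s hs using key
  have hcover : V ≤ iSup W := by
    intro x hx
    refine Opens.mem_iSup.mpr ?_
    exact ⟨⟨x, hx⟩, m ⟨x, hx⟩⟩
  have hcompat : ∀ i j, F'.val.map (homOfLE (inf_le_left : W i ⊓ W j ≤ W i)).op (s i)
      = F'.val.map (homOfLE (inf_le_right : W i ⊓ W j ≤ W j)).op (s j) := by
    intro i j
    apply my_app_injective α hinj
    rw [res_naturality, res_naturality, hs, hs, res_res, res_res]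
  obtain ⟨gl, hgl⟩ := my_glue F' W V hWV hcover s hcompat
  refine ⟨gl, ?_⟩
  apply my_locality F W V hWV hcover
  intro i
  rw [← res_naturality α (hWV i) gl, hgl i, hs]


lemma local_lift (𝒯 : Set (Opens X))
    (hbasis : ∀ U : Opens X, ∃ S ⊆ 𝒯, U = sSup S)
    (hsurj : ∀ x : ↑X,
      Function.Surjective ((TopCat.Presheaf.stalkFunctor (ModuleCat k) x).map β.hom))
    (U : Opens X) (s'' : F''.val.obj (op U)) (x : X) (hx : x ∈ U) :
    ∃ (V : Opens X) (_ : V ∈ 𝒯) (_ : x ∈ V) (hVU : V ≤ U) (t : F.val.obj (op V)),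
      β.hom.app (op V) t = F''.val.map (homOfLE hVU).op s'' := by
  obtain ⟨σ, hσ⟩ := hsurj x (TopCat.Presheaf.germ F''.val U x hx s'')
  obtain ⟨W₀, m₀, t₀, rfl⟩ := my_germ_exist F x σ
  rw [my_stalk_map_germ β W₀ x m₀ t₀] at hσ
  obtain ⟨W, m, hWW₀, hWU, he⟩ := my_germ_eq F'' x m₀ hx _ _ hσ
  obtain ⟨S, hS𝒯, hSW⟩ := hbasis W
  have hmem : x ∈ sSup S := hSW ▸ m
  rw [Opens.mem_sSup] at hmem
  obtain ⟨V, hVS, hxV⟩ := hmem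
  have hVW : V ≤ W := hSW ▸ le_sSup hVS
  refine ⟨V, hS𝒯 hVS, hxV, hVW.trans hWU,
    F.val.map (homOfLE (hVW.trans hWW₀)).op t₀, ?_⟩
  have h2 := congrArg (F''.val.map (homOfLE hVW).op) he
  rw [res_res, res_res] at h2
  rw [show homOfLE (hVW.trans hWW₀) = homOfLE hVW ≫ homOfLE hWW₀ from rfl]
  have h3 : F.val.map (homOfLE hVW ≫ homOfLE hWW₀).op t₀
      = F.val.map (homOfLE hVW).op (F.val.map (homOfLE hWW₀).op t₀) := (res_res F _ _ _).symm
  rw [h3, res_naturality β hVW, res_naturality β hWW₀]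
  rw [res_res]
  exact h2


lemma extend_lift
    (hinj : ∀ x : ↑X,
      Function.Injective ((TopCat.Presheaf.stalkFunctor (ModuleCat k) x).map α.hom))
    (hexact : ∀ x : ↑X,
      LinearMap.range ((TopCat.Presheaf.stalkFunctor (ModuleCat k) x).map α.hom).hom
        = LinearMap.ker ((TopCat.Presheaf.stalkFunctor (ModuleCat k) x).map β.hom).hom)
    (U : Opens X) (s'' : F''.val.obj (op U))
    (A B : Opens X) (hAU : A ≤ U) (hBU : B ≤ U)
    (hsurjAB : Function.Surjective (F'.val.map (homOfLE (inf_le_right : A ⊓ B ≤ B)).op))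
    (t : F.val.obj (op A)) (ht : β.hom.app (op A) t = F''.val.map (homOfLE hAU).op s'')
    (s : F.val.obj (op B)) (hs : β.hom.app (op B) s = F''.val.map (homOfLE hBU).op s'')
    (hABU : A ⊔ B ≤ U) :
    ∃ t' : F.val.obj (op (A ⊔ B)),
      β.hom.app (op (A ⊔ B)) t' = F''.val.map (homOfLE hABU).op s''
      ∧ F.val.map (homOfLE (le_sup_left : A ≤ A ⊔ B)).op t' = t := by
  have hd : β.hom.app (op (A ⊓ B)) (F.val.map (homOfLE (inf_le_left : A ⊓ B ≤ A)).op t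
      - F.val.map (homOfLE (inf_le_right : A ⊓ B ≤ B)).op s) = 0 := by
    rw [map_sub, res_naturality β, res_naturality β, ht, hs, res_res, res_res, sub_self]
  obtain ⟨c, hc⟩ := sections_exact F' F F'' α β hinj hexact (A ⊓ B) _ hd
  obtain ⟨c', hc'⟩ := hsurjAB c
  set s' := s + α.hom.app (op B) c' with hs'def
  have hres : F.val.map (homOfLE (inf_le_left : A ⊓ B ≤ A)).op t
      = F.val.map (homOfLE (inf_le_right : A ⊓ B ≤ B)).op s' := by
    rw [hs'def, map_add, ← res_naturality α (inf_le_right : A ⊓ B ≤ B) c', hc', hc]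
    abel
  have hβs' : β.hom.app (op B) s' = F''.val.map (homOfLE hBU).op s'' := by
    rw [hs'def, map_add, beta_alpha_zero F' F F'' α β hexact, add_zero, hs]
  let G : Bool → Opens X := fun b => if b then A else B
  have hGle : ∀ b, G b ≤ A ⊔ B := by
    intro b; cases b
    · exact le_sup_right
    · exact le_sup_left
  have hcover : A ⊔ B ≤ iSup G :=
    sup_le (le_iSup G true) (le_iSup G false)
  let sf : ∀ b, F.val.obj (op (G b)) := fun b => match b with
    | true => t
    | false => s'
  have hcompat : ∀ i j, F.val.map (homOfLE (inf_le_left : G i ⊓ G j ≤ G i)).op (sf i)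
      = F.val.map (homOfLE (inf_le_right : G i ⊓ G j ≤ G j)).op (sf j) := by
    intro i j
    cases i <;> cases j
    · rfl
    · -- i = false (B), j = true (A)
      have h2 := congrArg (F.val.map (homOfLE
        (le_inf inf_le_right inf_le_left : B ⊓ A ≤ A ⊓ B)).op) hres
      rw [res_res, res_res] at h2
      exact h2.symm
    · -- i = true (A), j = false (B)
      exact hres
    · rfl
  obtain ⟨t', ht'⟩ := my_glue F G (A ⊔ B) hGle hcover sf hcompat
  refine ⟨t', ?_, ht' true⟩
  apply my_locality F'' G (A ⊔ B) hGle hcover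
  intro b
  cases b
  · have h5 : F.val.map (homOfLE (hGle false)).op t' = s' := ht' false
    rw [← res_naturality β (hGle false) t', h5, res_res]
    exact hβs'
  · have h5 : F.val.map (homOfLE (hGle true)).op t' = t := ht' true
    rw [← res_naturality β (hGle true) t', h5, res_res]
    exact ht


lemma res_self (G : TopCat.Sheaf (ModuleCat.{0} k) X) {A : Opens X} (h : A ≤ A)
    (x : G.val.obj (op A)) : G.val.map (homOfLE h).op x = x := by
  have : homOfLE h = 𝟙 A := rfl
  rw [this]
  have := ConcreteCategory.congr_hom (G.val.map_id (op A)) x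
  exact this.trans rfl

end StmtAux

open StmtAux in
theorem stmt0 {k : Type} [Field k] {X : TopCat.{0}} (𝒯 : Set (Opens X))
    -- 𝒯 is a basis of the topology:
    (hbasis : ∀ U : Opens X, ∃ S ⊆ 𝒯, U = sSup S)
    -- every element of 𝒯 is Lindelöf:
    (hLind : ∀ U ∈ 𝒯, LindelofSet (U : Opens ↑X).carrier)
    -- 𝒯 is stable under finite unions and intersections:
    (hunion : ∀ U ∈ 𝒯, ∀ V ∈ 𝒯, U ⊔ V ∈ 𝒯)
    (hinter : ∀ U ∈ 𝒯, ∀ V ∈ 𝒯, U ⊓ V ∈ 𝒯)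
    -- a short exact sequence 0 → F' → F → F'' → 0 of sheaves of k-vector spaces:
    (F' F F'' : TopCat.Sheaf (ModuleCat.{0} k) X) (α : F' ⟶ F) (β : F ⟶ F'')
    (hinj : ∀ x : ↑X,
      Function.Injective ((TopCat.Presheaf.stalkFunctor (ModuleCat k) x).map α.hom))
    (hexact : ∀ x : ↑X,
      LinearMap.range ((TopCat.Presheaf.stalkFunctor (ModuleCat k) x).map α.hom).hom
        = LinearMap.ker ((TopCat.Presheaf.stalkFunctor (ModuleCat k) x).map β.hom).hom)
    (hsurj : ∀ x : ↑X,
      Function.Surjective ((TopCat.Presheaf.stalkFunctor (ModuleCat k) x).map β.hom))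
    -- F' is 𝒯-flabby:
    (hflabby : TFlabby 𝒯 F')
    -- U is an open Lindelöf subset:
    (U : Opens X) (hU : LindelofSet U.carrier) :
    Function.Surjective (β.hom.app (op U)) := by
  intro s''
  classical
  by_cases hne : ∃ x, x ∈ U
  swap
  · -- U is empty
    have hUbot : U = ⊥ := by
      ext x
      simp only [Opens.coe_bot, Set.mem_empty_iff_false, iff_false, SetLike.mem_coe]
      exact fun hx => hne ⟨x, hx⟩
    refine ⟨0, my_locality F'' (fun i : Empty => i.elim) U (fun i => i.elim)
      (le_trans (le_of_eq hUbot) bot_le) _ _ (fun i => i.elim)⟩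
  -- U is nonempty
  obtain ⟨𝒱, h𝒱sub, h𝒱c, h𝒱cov⟩ := hU ((fun V : Opens X => (V : Set X)) '' {V | V ∈ 𝒯 ∧
      ∃ (h : V ≤ U) (t : F.val.obj (op V)),
        β.hom.app (op V) t = F''.val.map (homOfLE h).op s''})
    (by rintro u ⟨V, -, rfl⟩; exact V.2)
    (by intro x hx
        obtain ⟨V, hV𝒯, hxV, hVU, t, ht⟩ :=
          local_lift F F'' β 𝒯 hbasis hsurj U s'' x hx
        exact ⟨V, ⟨V, ⟨hV𝒯, hVU, t, ht⟩, rfl⟩, hxV⟩)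
  have h𝒱ne : 𝒱.Nonempty := by
    obtain ⟨x, hx⟩ := hne
    obtain ⟨u, hu, _⟩ := h𝒱cov hx
    exact ⟨u, hu⟩
  obtain ⟨f, hf⟩ := h𝒱c.exists_eq_range h𝒱ne
  have hgoodf : ∀ n, ∃ V : Opens X, (V ∈ 𝒯 ∧
      ∃ (h : V ≤ U) (t : F.val.obj (op V)),
        β.hom.app (op V) t = F''.val.map (homOfLE h).op s'') ∧ (V : Set X) = f n := by
    intro n
    have : f n ∈ 𝒱 := hf ▸ Set.mem_range_self n
    obtain ⟨V, hgV, hVe⟩ := h𝒱sub this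
    exact ⟨V, hgV, hVe⟩
  choose e hge hee using hgoodf
  have heU : ∀ n, e n ≤ U := fun n => (hge n).2.choose
  have hUcov : U ≤ iSup e := by
    intro x hx
    obtain ⟨u, hu, hxu⟩ := h𝒱cov hx
    rw [hf] at hu
    obtain ⟨n, rfl⟩ := hu
    rw [← hee n] at hxu
    exact Opens.mem_iSup.mpr ⟨n, hxu⟩
  set W : ℕ → Opens ↑X := fun n => partialSups e n with hWdef
  have hWsucc : ∀ n, W (n + 1) = W n ⊔ e (n + 1) := fun n => partialSups_succ e n
  have hW0 : W 0 = e 0 := partialSups_zero e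
  have hW𝒯 : ∀ n, W n ∈ 𝒯 := by
    intro n
    induction n with
    | zero => rw [hW0]; exact (hge 0).1
    | succ n ih => rw [hWsucc n]; exact hunion _ ih _ (hge (n + 1)).1
  have heW : ∀ n, e n ≤ W n := fun n => le_partialSups e n
  have hWU : ∀ n, W n ≤ U := fun n => partialSups_le e n U (fun m _ => heU m)
  have hWmono : Monotone W := (partialSups e).monotone
  have hUcovW : U ≤ iSup W := hUcov.trans (iSup_mono heW)
  -- the inductive construction of compatible lifts
  have hbase : ∃ t : F.val.obj (op (W 0)),
      β.hom.app (op (W 0)) t = F''.val.map (homOfLE (hWU 0)).op s'' := by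
    obtain ⟨hVU, t, ht⟩ := (hge 0).2
    refine ⟨F.val.map (homOfLE (le_of_eq hW0)).op t, ?_⟩
    rw [res_naturality β (le_of_eq hW0) t, ht, res_res]
  have hex : ∀ n (p : {t : F.val.obj (op (W n)) //
      β.hom.app (op (W n)) t = F''.val.map (homOfLE (hWU n)).op s''}),
      ∃ q : {t : F.val.obj (op (W (n + 1))) //
        β.hom.app (op (W (n + 1))) t = F''.val.map (homOfLE (hWU (n + 1))).op s''},
      F.val.map (homOfLE (hWmono (Nat.le_succ n))).op q.1 = p.1 := by
    rintro n ⟨t, ht⟩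
    obtain ⟨hVU, s, hs⟩ := (hge (n + 1)).2
    have hsurjAB : Function.Surjective (F'.val.map (homOfLE
        (inf_le_right : W n ⊓ e (n + 1) ≤ e (n + 1))).op) :=
      hflabby _ (hge (n + 1)).1 _ (hinter _ (hW𝒯 n) _ (hge (n + 1)).1) inf_le_right
    obtain ⟨t', ht', htres⟩ := extend_lift F' F F'' α β hinj hexact U s''
      (W n) (e (n + 1)) (hWU n) hVU hsurjAB t ht s hs
      (sup_le (hWU n) hVU)
    have hle : W (n + 1) ≤ W n ⊔ e (n + 1) := le_of_eq (hWsucc n)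
    refine ⟨⟨F.val.map (homOfLE hle).op t', ?_⟩, ?_⟩
    · rw [res_naturality β hle t', ht', res_res]
    · show F.val.map (homOfLE (hWmono (Nat.le_succ n))).op
        (F.val.map (homOfLE hle).op t') = t
      rw [res_res]
      have h7 : (homOfLE ((hWmono (Nat.le_succ n)).trans hle) :
          W n ⟶ W n ⊔ e (n + 1)) = homOfLE le_sup_left := rfl
      rw [h7]
      exact htres
  choose step hstep using hex
  let seq : ∀ n, {t : F.val.obj (op (W n)) //
      β.hom.app (op (W n)) t = F''.val.map (homOfLE (hWU n)).op s''} :=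
    fun n => Nat.rec ⟨hbase.choose, hbase.choose_spec⟩ step n
  have hseq_succ : ∀ n,
      F.val.map (homOfLE (hWmono (Nat.le_succ n))).op (seq (n + 1)).1 = (seq n).1 :=
    fun n => hstep n (seq n)
  have hchain : ∀ m n (h : m ≤ n),
      F.val.map (homOfLE (hWmono h)).op (seq n).1 = (seq m).1 := by
    intro m n h
    induction h with
    | refl => exact res_self F _ _
    | @step p hp ih =>
      rw [show (hWmono (Nat.le_succ_of_le hp) : W m ≤ W (p + 1))
        = (hWmono hp).trans (hWmono (Nat.le_succ p)) from rfl]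
      rw [← res_res F (hWmono hp) (hWmono (Nat.le_succ p)), hseq_succ p]
      exact ih
  have hcompat : ∀ i j, F.val.map (homOfLE (inf_le_left : W i ⊓ W j ≤ W i)).op (seq i).1
      = F.val.map (homOfLE (inf_le_right : W i ⊓ W j ≤ W j)).op (seq j).1 := by
    intro i j
    rcases le_total i j with h | h
    · rw [← hchain i j h, res_res]
    · rw [← hchain j i h, res_res]
  obtain ⟨tt, htt⟩ := my_glue F W U hWU hUcovW (fun n => (seq n).1) hcompat
  refine ⟨tt, ?_⟩
  apply my_locality F'' W U hWU hUcovW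
  intro n
  rw [← res_naturality β (hWU n) tt, htt n]
  exact (seq n).2
end

section
/- Let X be a topological space with a basis 𝒯 of open sets, each Lindelöf, stable under finite unions and intersections, and let k be a field. If 0 → F' → F → F'' → 0 is a short exact sequence of sheaves of k-vector spaces on X with F' 𝒯-flabby, then F is 𝒯-flabby if and only if F'' is 𝒯-flabby. -/
open CategoryTheory TopologicalSpace Opposite

/-- Partial unions of a sequence of opens. -/
def auxPartialSup {X : TopCat.{0}} (V : ℕ → Opens X) : ℕ → Opens X
  | 0 => V 0
  | n + 1 => auxPartialSup V n ⊔ V (n + 1)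

section Aux

variable {k : Type} [Field k] {X : TopCat.{0}}
variable {F' F F'' : TopCat.Sheaf (ModuleCat.{0} k) X} (α : F' ⟶ F) (β : F ⟶ F'')

lemma aux_hom_eq {U V : Opens X} (i : V ⟶ U) : i = homOfLE i.le := Subsingleton.elim _ _

lemma aux_res_res (G : TopCat.Sheaf (ModuleCat.{0} k) X) {U V W : Opens X}
    (h1 : W ≤ V) (h2 : V ≤ U) (s : G.val.obj (op U)) :
    G.val.map (homOfLE h1).op (G.val.map (homOfLE h2).op s)
      = G.val.map (homOfLE (h1.trans h2)).op s := by
  have h : G.val.map (homOfLE h2).op ≫ G.val.map (homOfLE h1).op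
      = G.val.map (homOfLE (h1.trans h2)).op := by
    rw [← G.val.map_comp]; rfl
  exact ConcreteCategory.congr_hom h s

lemma aux_res_id (G : TopCat.Sheaf (ModuleCat.{0} k) X) {U : Opens X}
    (h : U ≤ U) (s : G.val.obj (op U)) :
    G.val.map (homOfLE h).op s = s := by
  have : (homOfLE h : U ⟶ U) = 𝟙 U := Subsingleton.elim _ _
  rw [this]
  exact ConcreteCategory.congr_hom (G.val.map_id (op U)) s

lemma aux_nat_res {G H : TopCat.Sheaf (ModuleCat.{0} k) X} (φ : G ⟶ H) {U V : Opens X}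
    (h : V ≤ U) (s : G.val.obj (op U)) :
    φ.hom.app (op V) (G.val.map (homOfLE h).op s)
      = H.val.map (homOfLE h).op (φ.hom.app (op U) s) :=
  ConcreteCategory.congr_hom (φ.hom.naturality (homOfLE h).op) s

lemma aux_basis_shrink {𝒯 : Set (Opens X)} (hbasis : ∀ U : Opens X, ∃ S ⊆ 𝒯, U = sSup S)
    {V : Opens X} {x : X} (hx : x ∈ V) : ∃ W ∈ 𝒯, x ∈ W ∧ W ≤ V := by
  obtain ⟨S, hS, rfl⟩ := hbasis V
  obtain ⟨W, hW, hxW⟩ := Opens.mem_sSup.1 hx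
  exact ⟨W, hS hW, hxW, le_sSup hW⟩

lemma aux_subsingleton_of_empty (G : TopCat.Sheaf (ModuleCat.{0} k) X) {U : Opens X}
    (h : (U : Set X) = ∅) : Subsingleton (G.val.obj (op U)) := by
  have hbot : U = ⊥ := by
    ext x
    rw [h]
    simp
  have it := G.isTerminalOfEqEmpty (U := U) hbot
  have hz : (𝟙 (G.val.obj (op U))) = (0 : G.val.obj (op U) ⟶ G.val.obj (op U)) :=
    it.hom_ext _ _
  constructor
  intro a b
  calc a = (𝟙 (G.val.obj (op U))) a := rfl
    _ = (0 : G.val.obj (op U) ⟶ G.val.obj (op U)) a := by rw [hz]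
    _ = (0 : G.val.obj (op U) ⟶ G.val.obj (op U)) b := rfl
    _ = (𝟙 (G.val.obj (op U))) b := by rw [hz]
    _ = b := rfl

lemma aux_app_inj
    (hinj : ∀ x : X,
      Function.Injective ((TopCat.Presheaf.stalkFunctor (ModuleCat k) x).map α.hom))
    (U : Opens X) : Function.Injective (α.hom.app (op U)) :=
  TopCat.Presheaf.app_injective_of_stalkFunctor_map_injective α.hom U (fun x _ => hinj x)

lemma aux_beta_alpha_zero
    (hexact : ∀ x : X,
      LinearMap.range ((TopCat.Presheaf.stalkFunctor (ModuleCat k) x).map α.hom).hom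
        = LinearMap.ker ((TopCat.Presheaf.stalkFunctor (ModuleCat k) x).map β.hom).hom)
    (V : Opens X) (s : F'.val.obj (op V)) :
    β.hom.app (op V) (α.hom.app (op V) s) = 0 := by
  apply TopCat.Presheaf.section_ext F'' V
  intro x hx
  have h3 : ((TopCat.Presheaf.stalkFunctor (ModuleCat k) x).map α.hom)
      (F'.presheaf.germ V x hx s) ∈
      LinearMap.ker ((TopCat.Presheaf.stalkFunctor (ModuleCat k) x).map β.hom).hom := by
    rw [← hexact x]; exact ⟨_, rfl⟩
  have e1 : F''.presheaf.germ V x hx ((β.hom.app (op V)) (α.hom.app (op V) s))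
      = ((TopCat.Presheaf.stalkFunctor (ModuleCat k) x).map β.hom)
          (F.presheaf.germ V x hx (α.hom.app (op V) s)) :=
    (ConcreteCategory.congr_hom (TopCat.Presheaf.stalkFunctor_map_germ V x hx β.hom)
      (α.hom.app (op V) s)).symm
  have e2 : F.presheaf.germ V x hx (α.hom.app (op V) s)
      = ((TopCat.Presheaf.stalkFunctor (ModuleCat k) x).map α.hom)
          (F'.presheaf.germ V x hx s) :=
    (ConcreteCategory.congr_hom (TopCat.Presheaf.stalkFunctor_map_germ V x hx α.hom) s).symm
  rw [map_zero]
  refine e1.trans ?_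
  rw [e2]
  exact h3

lemma aux_ker_in_im
    (hinj : ∀ x : X,
      Function.Injective ((TopCat.Presheaf.stalkFunctor (ModuleCat k) x).map α.hom))
    (hexact : ∀ x : X,
      LinearMap.range ((TopCat.Presheaf.stalkFunctor (ModuleCat k) x).map α.hom).hom
        = LinearMap.ker ((TopCat.Presheaf.stalkFunctor (ModuleCat k) x).map β.hom).hom)
    (V : Opens X) (t : F.val.obj (op V)) (ht : β.hom.app (op V) t = 0) :
    ∃ s' : F'.val.obj (op V), α.hom.app (op V) s' = t := by
  have key : ∀ x : (V : Opens X),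
      ∃ (W : Opens X) (hxW : x.1 ∈ W) (hWV : W ≤ V) (s' : F'.val.obj (op W)),
        α.hom.app (op W) s' = F.val.map (homOfLE hWV).op t := by
    rintro ⟨x, hx⟩
    have hk : ((TopCat.Presheaf.stalkFunctor (ModuleCat k) x).map β.hom)
        (F.presheaf.germ V x hx t) = 0 := by
      have e1 : ((TopCat.Presheaf.stalkFunctor (ModuleCat k) x).map β.hom)
          (F.presheaf.germ V x hx t)
          = F''.presheaf.germ V x hx (β.hom.app (op V) t) :=
        ConcreteCategory.congr_hom (TopCat.Presheaf.stalkFunctor_map_germ V x hx β.hom) t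
      rw [e1, ht, map_zero]; rfl
    have hr : F.presheaf.germ V x hx t ∈
        LinearMap.range ((TopCat.Presheaf.stalkFunctor (ModuleCat k) x).map α.hom).hom := by
      rw [hexact x]; exact hk
    obtain ⟨g, hg⟩ := hr
    obtain ⟨W₀, hxW₀, s₀, hs₀⟩ := F'.presheaf.germ_exist g
    have hs₀' : F'.presheaf.germ W₀ x hxW₀ s₀ = g := hs₀
    have hg' : ((TopCat.Presheaf.stalkFunctor (ModuleCat k) x).map α.hom) g
        = F.presheaf.germ V x hx t := hg
    have hgerm : F.presheaf.germ W₀ x hxW₀ (α.hom.app (op W₀) s₀)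
        = F.presheaf.germ V x hx t := by
      have e2 : ((TopCat.Presheaf.stalkFunctor (ModuleCat k) x).map α.hom)
          (F'.presheaf.germ W₀ x hxW₀ s₀)
          = F.presheaf.germ W₀ x hxW₀ (α.hom.app (op W₀) s₀) :=
        ConcreteCategory.congr_hom (TopCat.Presheaf.stalkFunctor_map_germ W₀ x hxW₀ α.hom) s₀
      rw [← e2, hs₀', hg']
    obtain ⟨W, hxW, iU, iV, heq⟩ := F.presheaf.germ_eq x hxW₀ hx _ _ hgerm
    refine ⟨W, hxW, iV.le, F'.val.map iU.op s₀, ?_⟩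
    have e3 : α.hom.app (op W) (F'.val.map iU.op s₀)
        = F.val.map iU.op (α.hom.app (op W₀) s₀) :=
      ConcreteCategory.congr_hom (α.hom.naturality iU.op) s₀
    have heq' : F.val.map iU.op (α.hom.app (op W₀) s₀)
        = F.val.map iV.op t := heq
    rw [e3, heq', aux_hom_eq iV]
  choose W m hle s' hs' using key
  have compat : TopCat.Presheaf.IsCompatible F'.val W s' := by
    intro i j
    apply aux_app_inj α hinj
    have n1 : α.hom.app (op (W i ⊓ W j)) (F'.val.map (Opens.infLELeft (W i) (W j)).op (s' i))
        = F.val.map (Opens.infLELeft (W i) (W j)).op (α.hom.app (op (W i)) (s' i)) :=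
      ConcreteCategory.congr_hom (α.hom.naturality (Opens.infLELeft (W i) (W j)).op) (s' i)
    have n2 : α.hom.app (op (W i ⊓ W j)) (F'.val.map (Opens.infLERight (W i) (W j)).op (s' j))
        = F.val.map (Opens.infLERight (W i) (W j)).op (α.hom.app (op (W j)) (s' j)) :=
      ConcreteCategory.congr_hom (α.hom.naturality (Opens.infLERight (W i) (W j)).op) (s' j)
    show α.hom.app (op (W i ⊓ W j)) (F'.val.map (Opens.infLELeft (W i) (W j)).op (s' i))
        = α.hom.app (op (W i ⊓ W j)) (F'.val.map (Opens.infLERight (W i) (W j)).op (s' j))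
    rw [n1, n2, hs' i, hs' j, aux_hom_eq (Opens.infLELeft (W i) (W j)),
      aux_hom_eq (Opens.infLERight (W i) (W j)), aux_res_res, aux_res_res]
  obtain ⟨S, hS, -⟩ := F'.existsUnique_gluing' W V (fun i => homOfLE (hle i))
    (fun x hx => Opens.mem_iSup.mpr ⟨⟨x, hx⟩, m ⟨x, hx⟩⟩) s' compat
  refine ⟨S, ?_⟩
  apply F.eq_of_locally_eq' W V (fun i => homOfLE (hle i))
    (fun x hx => Opens.mem_iSup.mpr ⟨⟨x, hx⟩, m ⟨x, hx⟩⟩)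
  intro i
  have hSi : F'.val.map (homOfLE (hle i)).op S = s' i := hS i
  have n3 : α.hom.app (op (W i)) (F'.val.map (homOfLE (hle i)).op S)
      = F.val.map (homOfLE (hle i)).op (α.hom.app (op V) S) :=
    ConcreteCategory.congr_hom (α.hom.naturality (homOfLE (hle i)).op) S
  show F.val.map (homOfLE (hle i)).op (α.hom.app (op V) S)
      = F.val.map (homOfLE (hle i)).op t
  rw [← n3, hSi, hs' i]

lemma aux_local_lift {𝒯 : Set (Opens X)} (hbasis : ∀ U : Opens X, ∃ S ⊆ 𝒯, U = sSup S)
    (hsurj : ∀ x : X,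
      Function.Surjective ((TopCat.Presheaf.stalkFunctor (ModuleCat k) x).map β.hom))
    (U : Opens X) (s'' : F''.val.obj (op U)) {x : X} (hx : x ∈ U) :
    ∃ W ∈ 𝒯, ∃ (_ : x ∈ W) (hWU : W ≤ U) (t : F.val.obj (op W)),
      β.hom.app (op W) t = F''.val.map (homOfLE hWU).op s'' := by
  have hls : TopCat.Presheaf.IsLocallySurjective β.hom :=
    (TopCat.Presheaf.locally_surjective_iff_surjective_on_stalks β.hom).mpr hsurj
  obtain ⟨V, ι, ⟨t0, ht0⟩, hxV⟩ :=
    (TopCat.Presheaf.isLocallySurjective_iff β.hom).mp hls U s'' x hx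
  have ht0' : β.hom.app (op V) t0 = F''.val.map (homOfLE ι).op s'' := by
    exact ht0
  obtain ⟨W, hW𝒯, hxW, hWV⟩ := aux_basis_shrink hbasis hxV
  refine ⟨W, hW𝒯, hxW, hWV.trans ι, F.val.map (homOfLE hWV).op t0, ?_⟩
  rw [aux_nat_res β hWV t0, ht0', aux_res_res]

end Aux
section Key
variable {k : Type} [Field k] {X : TopCat.{0}}
variable {F' F F'' : TopCat.Sheaf (ModuleCat.{0} k) X} (α : F' ⟶ F) (β : F ⟶ F'')

lemma aux_key_surj {𝒯 : Set (Opens X)}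
    (hbasis : ∀ U : Opens X, ∃ S ⊆ 𝒯, U = sSup S)
    (hLind : ∀ U ∈ 𝒯, LindelofSet (U : Opens ↑X).carrier)
    (hunion : ∀ U ∈ 𝒯, ∀ V ∈ 𝒯, U ⊔ V ∈ 𝒯)
    (hinter : ∀ U ∈ 𝒯, ∀ V ∈ 𝒯, U ⊓ V ∈ 𝒯)
    (hinj : ∀ x : ↑X,
      Function.Injective ((TopCat.Presheaf.stalkFunctor (ModuleCat k) x).map α.hom))
    (hexact : ∀ x : ↑X,
      LinearMap.range ((TopCat.Presheaf.stalkFunctor (ModuleCat k) x).map α.hom).hom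
        = LinearMap.ker ((TopCat.Presheaf.stalkFunctor (ModuleCat k) x).map β.hom).hom)
    (hsurj : ∀ x : ↑X,
      Function.Surjective ((TopCat.Presheaf.stalkFunctor (ModuleCat k) x).map β.hom))
    (hflabby : TFlabby 𝒯 F')
    {U : Opens X} (hU : U ∈ 𝒯) :
    Function.Surjective (β.hom.app (op U)) := by
  intro s''
  rcases Set.eq_empty_or_nonempty (U : Set X) with hUe | ⟨x₀, hx₀⟩
  · have := aux_subsingleton_of_empty F'' hUe
    exact ⟨0, Subsingleton.elim _ _⟩
  -- choose a local lift at every point of U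
  choose W hW𝒯 hxW hWU t ht using
    fun x : (U : Opens X) => aux_local_lift β hbasis hsurj U s'' x.2
  -- Lindelöf: countable subcover
  obtain ⟨𝒱, h𝒱U, h𝒱c, h𝒱cov⟩ := hLind U hU
    (Set.range fun x : (U : Opens X) => ((W x : Opens X) : Set X))
    (by rintro u ⟨x, rfl⟩; exact (W x).2)
    (fun x hx => Set.mem_sUnion.mpr ⟨_, ⟨⟨x, hx⟩, rfl⟩, hxW ⟨x, hx⟩⟩)
  have h𝒱'c : (insert ((W ⟨x₀, hx₀⟩ : Opens X) : Set X) 𝒱).Countable := h𝒱c.insert _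
  have h𝒱'U : insert ((W ⟨x₀, hx₀⟩ : Opens X) : Set X) 𝒱 ⊆
      Set.range fun x : (U : Opens X) => ((W x : Opens X) : Set X) := by
    rintro u (rfl | hu)
    · exact ⟨⟨x₀, hx₀⟩, rfl⟩
    · exact h𝒱U hu
  obtain ⟨f, hf⟩ := Set.Countable.exists_eq_range h𝒱'c ⟨_, Set.mem_insert _ _⟩
  have hmem : ∀ n, f n ∈ insert ((W ⟨x₀, hx₀⟩ : Opens X) : Set X) 𝒱 := fun n => by
    rw [hf]; exact Set.mem_range_self n
  choose p hp using fun n => h𝒱'U (hmem n)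
  -- the countable family of basic opens with lifts
  let V' : ℕ → Opens X := fun n => W (p n)
  have hV'𝒯 : ∀ n, V' n ∈ 𝒯 := fun n => hW𝒯 (p n)
  have hV'U : ∀ n, V' n ≤ U := fun n => hWU (p n)
  have hcov : ∀ y ∈ U, ∃ n, y ∈ V' n := by
    intro y hy
    have hy' : y ∈ ⋃₀ insert ((W ⟨x₀, hx₀⟩ : Opens X) : Set X) 𝒱 := by
      obtain ⟨u, hu, hyu⟩ := h𝒱cov hy
      exact ⟨u, Set.mem_insert_of_mem _ hu, hyu⟩
    obtain ⟨u, hu, hyu⟩ := hy'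
    rw [hf] at hu
    obtain ⟨n, rfl⟩ := hu
    refine ⟨n, ?_⟩
    have hpn : ((V' n : Opens X) : Set X) = f n := hp n
    show y ∈ ((V' n : Opens X) : Set X)
    rw [hpn]
    exact hyu
  -- partial unions
  let Un : ℕ → Opens X := auxPartialSup V'
  have hUnS : ∀ n, Un (n + 1) = Un n ⊔ V' (n + 1) := fun n => rfl
  have hUn𝒯 : ∀ n, Un n ∈ 𝒯 := by
    intro n
    induction n with
    | zero => exact hV'𝒯 0
    | succ m ih => exact hunion _ ih _ (hV'𝒯 (m + 1))
  have hUnU : ∀ n, Un n ≤ U := by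
    intro n
    induction n with
    | zero => exact hV'U 0
    | succ m ih => exact sup_le ih (hV'U (m + 1))
  have hUnmono : ∀ n, Un n ≤ Un (n + 1) := fun n => le_sup_left
  have hUnle : ∀ {m n : ℕ}, m ≤ n → Un m ≤ Un n := by
    intro m n h
    induction h with
    | refl => exact le_refl _
    | step h ih => exact ih.trans le_sup_left
  have hV'Un : ∀ n, V' n ≤ Un n := by
    intro n
    cases n with
    | zero => exact le_refl _
    | succ m => exact le_sup_right
  -- the inductive step
  have step : ∀ n (g : F.val.obj (op (Un n))),
      β.hom.app (op (Un n)) g = F''.val.map (homOfLE (hUnU n)).op s'' →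
      ∃ g' : F.val.obj (op (Un (n + 1))),
        (β.hom.app (op (Un (n + 1))) g' = F''.val.map (homOfLE (hUnU (n + 1))).op s'')
        ∧ F.val.map (homOfLE (hUnmono n)).op g' = g := by
    intro n g hg
    have hD𝒯 : Un n ⊓ V' (n + 1) ∈ 𝒯 := hinter _ (hUn𝒯 n) _ (hV'𝒯 (n + 1))
    have htn : β.hom.app (op (V' (n + 1))) (t (p (n + 1)))
        = F''.val.map (homOfLE (hV'U (n + 1))).op s'' := ht (p (n + 1))
    -- the difference of the two lifts on the intersection
    have hβd : β.hom.app (op (Un n ⊓ V' (n + 1)))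
        (F.val.map (homOfLE (inf_le_left : Un n ⊓ V' (n + 1) ≤ Un n)).op g
          - F.val.map (homOfLE (inf_le_right : Un n ⊓ V' (n + 1) ≤ V' (n + 1))).op
              (t (p (n + 1)))) = 0 := by
      rw [map_sub, aux_nat_res β inf_le_left g, aux_nat_res β inf_le_right (t (p (n + 1))),
        hg, htn, aux_res_res, aux_res_res, sub_self]
    obtain ⟨s1, hs1⟩ := aux_ker_in_im α β hinj hexact _ _ hβd
    obtain ⟨s2, hs2⟩ := hflabby _ (hV'𝒯 (n + 1)) _ hD𝒯 inf_le_right s1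
    -- the corrected lift on V' (n+1)
    have hβt' : β.hom.app (op (V' (n + 1)))
        (t (p (n + 1)) + α.hom.app (op (V' (n + 1))) s2)
        = F''.val.map (homOfLE (hV'U (n + 1))).op s'' := by
      rw [map_add, aux_beta_alpha_zero α β hexact, add_zero, htn]
    have hDeq : F.val.map (homOfLE (inf_le_right : Un n ⊓ V' (n + 1) ≤ V' (n + 1))).op
        (t (p (n + 1)) + α.hom.app (op (V' (n + 1))) s2)
        = F.val.map (homOfLE (inf_le_left : Un n ⊓ V' (n + 1) ≤ Un n)).op g := by
      rw [map_add, ← aux_nat_res α inf_le_right s2, hs2, hs1, add_sub_cancel]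
    -- glue the two sections over Un (n+1) = Un n ⊔ V' (n+1)
    let Up : Bool → Opens X := fun b => bif b then Un n else V' (n + 1)
    let sp : ∀ b : Bool, F.val.obj (op (Up b)) := fun b => match b with
      | true => g
      | false => t (p (n + 1)) + α.hom.app (op (V' (n + 1))) s2
    let ip : ∀ b : Bool, Up b ⟶ Un (n + 1) := fun b => match b with
      | true => homOfLE (hUnmono n)
      | false => homOfLE ((le_sup_right :
          V' (n + 1) ≤ Un n ⊔ V' (n + 1)).trans (le_of_eq (hUnS n).symm))
    have hpaircov : Un (n + 1) ≤ iSup Up := by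
      rw [hUnS n]
      exact sup_le (le_iSup Up true) (le_iSup Up false)
    have hpair : TopCat.Presheaf.IsCompatible F.val Up sp := by
      intro i j
      cases i <;> cases j
      · show F.val.map (Opens.infLELeft (V' (n + 1)) (V' (n + 1))).op
            (t (p (n + 1)) + α.hom.app (op (V' (n + 1))) s2)
            = F.val.map (Opens.infLERight (V' (n + 1)) (V' (n + 1))).op
            (t (p (n + 1)) + α.hom.app (op (V' (n + 1))) s2)
        rw [Subsingleton.elim (Opens.infLELeft (V' (n + 1)) (V' (n + 1)))
          (Opens.infLERight (V' (n + 1)) (V' (n + 1)))]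
      · -- false true : V' (n+1) against Un n
        show F.val.map (Opens.infLELeft (V' (n + 1)) (Un n)).op
              (t (p (n + 1)) + α.hom.app (op (V' (n + 1))) s2)
            = F.val.map (Opens.infLERight (V' (n + 1)) (Un n)).op g
        have h1 : V' (n + 1) ⊓ Un n ≤ Un n ⊓ V' (n + 1) := le_inf inf_le_right inf_le_left
        rw [aux_hom_eq (Opens.infLELeft (V' (n + 1)) (Un n)),
          aux_hom_eq (Opens.infLERight (V' (n + 1)) (Un n))]
        calc F.val.map (homOfLE (Opens.infLELeft (V' (n + 1)) (Un n)).le).op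
              (t (p (n + 1)) + α.hom.app (op (V' (n + 1))) s2)
            = F.val.map (homOfLE h1).op
                (F.val.map (homOfLE (inf_le_right : Un n ⊓ V' (n + 1) ≤ V' (n + 1))).op
                  (t (p (n + 1)) + α.hom.app (op (V' (n + 1))) s2)) :=
              (aux_res_res F h1 inf_le_right _).symm
          _ = F.val.map (homOfLE h1).op
                (F.val.map (homOfLE (inf_le_left : Un n ⊓ V' (n + 1) ≤ Un n)).op g) := by
              rw [hDeq]
          _ = F.val.map (homOfLE (Opens.infLERight (V' (n + 1)) (Un n)).le).op g :=
              aux_res_res F h1 inf_le_left g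
      · -- true false : Un n against V' (n+1)
        show F.val.map (Opens.infLELeft (Un n) (V' (n + 1))).op g
            = F.val.map (Opens.infLERight (Un n) (V' (n + 1))).op
              (t (p (n + 1)) + α.hom.app (op (V' (n + 1))) s2)
        rw [aux_hom_eq (Opens.infLELeft (Un n) (V' (n + 1))),
          aux_hom_eq (Opens.infLERight (Un n) (V' (n + 1)))]
        exact hDeq.symm
      · show F.val.map (Opens.infLELeft (Un n) (Un n)).op g
            = F.val.map (Opens.infLERight (Un n) (Un n)).op g
        rw [Subsingleton.elim (Opens.infLELeft (Un n) (Un n))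
          (Opens.infLERight (Un n) (Un n))]
    obtain ⟨g', hg', -⟩ := F.existsUnique_gluing' Up (Un (n + 1)) ip hpaircov sp hpair
    have hg'T : F.val.map (homOfLE (hUnmono n)).op g' = g := hg' true
    have hg'F : F.val.map (homOfLE ((le_sup_right :
          V' (n + 1) ≤ Un n ⊔ V' (n + 1)).trans (le_of_eq (hUnS n).symm))).op g'
        = t (p (n + 1)) + α.hom.app (op (V' (n + 1))) s2 := hg' false
    refine ⟨g', ?_, hg'T⟩
    apply F''.eq_of_locally_eq' Up (Un (n + 1)) ip hpaircov
    intro b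
    cases b
    · show F''.val.map (homOfLE ((le_sup_right :
            V' (n + 1) ≤ Un n ⊔ V' (n + 1)).trans (le_of_eq (hUnS n).symm))).op
          (β.hom.app (op (Un (n + 1))) g')
        = F''.val.map (homOfLE ((le_sup_right :
            V' (n + 1) ≤ Un n ⊔ V' (n + 1)).trans (le_of_eq (hUnS n).symm))).op
          (F''.val.map (homOfLE (hUnU (n + 1))).op s'')
      rw [← aux_nat_res β _ g', hg'F, hβt', aux_res_res]
    · show F''.val.map (homOfLE (hUnmono n)).op
          (β.hom.app (op (Un (n + 1))) g')
        = F''.val.map (homOfLE (hUnmono n)).op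
          (F''.val.map (homOfLE (hUnU (n + 1))).op s'')
      rw [← aux_nat_res β _ g', hg'T, hg, aux_res_res]
  choose step' hstep1 hstep2 using step
  -- the sequence of sections
  let gs : ∀ n, {g : F.val.obj (op (Un n)) //
      β.hom.app (op (Un n)) g = F''.val.map (homOfLE (hUnU n)).op s''} :=
    fun n => Nat.rec
      (motive := fun n => {g : F.val.obj (op (Un n)) //
        β.hom.app (op (Un n)) g = F''.val.map (homOfLE (hUnU n)).op s''})
      ⟨t (p 0), ht (p 0)⟩
      (fun m gm => ⟨step' m gm.1 gm.2, hstep1 m gm.1 gm.2⟩) n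
  have gsucc : ∀ n, F.val.map (homOfLE (hUnmono n)).op (gs (n + 1)).1 = (gs n).1 :=
    fun n => hstep2 n (gs n).1 (gs n).2
  have gchain : ∀ (m n : ℕ) (h : m ≤ n),
      F.val.map (homOfLE (hUnle h)).op (gs n).1 = (gs m).1 := by
    intro m n h
    induction h with
    | refl => exact aux_res_id F _ _
    | @step n' h' ih =>
        calc F.val.map (homOfLE (hUnle (Nat.le.step h'))).op (gs (n' + 1)).1
            = F.val.map (homOfLE (hUnle h')).op
                (F.val.map (homOfLE (hUnmono n')).op (gs (n' + 1)).1) :=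
              (aux_res_res F (hUnle h') (hUnmono n') _).symm
          _ = F.val.map (homOfLE (hUnle h')).op (gs n').1 := by rw [gsucc n']
          _ = (gs m).1 := ih
  have compat : TopCat.Presheaf.IsCompatible F.val Un (fun n => (gs n).1) := by
    intro i j
    show F.val.map (Opens.infLELeft (Un i) (Un j)).op (gs i).1
        = F.val.map (Opens.infLERight (Un i) (Un j)).op (gs j).1
    rw [aux_hom_eq (Opens.infLELeft (Un i) (Un j)),
      aux_hom_eq (Opens.infLERight (Un i) (Un j)),
      ← gchain i (max i j) (le_max_left i j),
      ← gchain j (max i j) (le_max_right i j),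
      aux_res_res, aux_res_res]
  have hcovUn : U ≤ iSup Un := fun x hx => by
    obtain ⟨n, hn⟩ := hcov x hx
    exact Opens.mem_iSup.mpr ⟨n, hV'Un n hn⟩
  obtain ⟨Sg, hSg, -⟩ := F.existsUnique_gluing' Un U (fun n => homOfLE (hUnU n))
    hcovUn (fun n => (gs n).1) compat
  refine ⟨Sg, ?_⟩
  apply F''.eq_of_locally_eq' Un U (fun n => homOfLE (hUnU n)) hcovUn
  intro n
  have hSg' : F.val.map (homOfLE (hUnU n)).op Sg = (gs n).1 := hSg n
  show F''.val.map (homOfLE (hUnU n)).op (β.hom.app (op U) Sg)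
      = F''.val.map (homOfLE (hUnU n)).op s''
  rw [← aux_nat_res β (hUnU n) Sg, hSg', (gs n).2]

end Key
theorem stmt1 {k : Type} [Field k] {X : TopCat.{0}} (𝒯 : Set (Opens X))
    -- 𝒯 is a basis of the topology:
    (hbasis : ∀ U : Opens X, ∃ S ⊆ 𝒯, U = sSup S)
    -- every element of 𝒯 is Lindelöf:
    (hLind : ∀ U ∈ 𝒯, LindelofSet (U : Opens ↑X).carrier)
    -- 𝒯 is stable under finite unions and intersections:
    (hunion : ∀ U ∈ 𝒯, ∀ V ∈ 𝒯, U ⊔ V ∈ 𝒯)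
    (hinter : ∀ U ∈ 𝒯, ∀ V ∈ 𝒯, U ⊓ V ∈ 𝒯)
    -- a short exact sequence 0 → F' → F → F'' → 0 of sheaves of k-vector spaces:
    (F' F F'' : TopCat.Sheaf (ModuleCat.{0} k) X) (α : F' ⟶ F) (β : F ⟶ F'')
    (hinj : ∀ x : ↑X,
      Function.Injective ((TopCat.Presheaf.stalkFunctor (ModuleCat k) x).map α.hom))
    (hexact : ∀ x : ↑X,
      LinearMap.range ((TopCat.Presheaf.stalkFunctor (ModuleCat k) x).map α.hom).hom
        = LinearMap.ker ((TopCat.Presheaf.stalkFunctor (ModuleCat k) x).map β.hom).hom)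
    (hsurj : ∀ x : ↑X,
      Function.Surjective ((TopCat.Presheaf.stalkFunctor (ModuleCat k) x).map β.hom))
    -- F' is 𝒯-flabby:
    -- F' is 𝒯-flabby:
    (hflabby : TFlabby 𝒯 F') :
    TFlabby 𝒯 F ↔ TFlabby 𝒯 F'' := by
  constructor
  · -- F flabby implies F'' flabby
    intro hF U hU V hV hVU s''
    obtain ⟨tV, htV⟩ :=
      aux_key_surj α β hbasis hLind hunion hinter hinj hexact hsurj hflabby hV s''
    obtain ⟨tU, htU⟩ := hF U hU V hV hVU tV
    refine ⟨β.hom.app (op U) tU, ?_⟩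
    rw [← aux_nat_res β hVU tU, htU, htV]
  · -- F'' flabby implies F flabby
    intro hF'' U hU V hV hVU s
    obtain ⟨S'', hS''⟩ := hF'' U hU V hV hVU (β.hom.app (op V) s)
    obtain ⟨T, hT⟩ :=
      aux_key_surj α β hbasis hLind hunion hinter hinj hexact hsurj hflabby hU S''
    have hker : β.hom.app (op V) (F.val.map (homOfLE hVU).op T - s) = 0 := by
      rw [map_sub, aux_nat_res β hVU T, hT, hS'', sub_self]
    obtain ⟨s1, hs1⟩ := aux_ker_in_im α β hinj hexact V _ hker
    obtain ⟨S1, hS1⟩ := hflabby U hU V hV hVU s1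
    refine ⟨T - α.hom.app (op U) S1, ?_⟩
    rw [map_sub, ← aux_nat_res α hVU S1, hS1, hs1, sub_sub_cancel]
end

section
/- Let X be a topological space, U an open Lindelöf subset of X, and F → G a surjective morphism of sheaves of abelian groups on X, with kernel K. Suppose that for every pair of open sets V ⊆ W contained in U, the restriction Γ(W;K) → Γ(V;K) is surjective (K is flabby relative to U). Then Γ(U;F) → Γ(U;G) is surjective. -/
open CategoryTheory TopologicalSpace Opposite

section Aux

variable {X : TopCat.{0}}

private lemma aux_hom_eq_s2 (H : TopCat.Presheaf AddCommGrpCat.{0} X) {P Q : Opens ↑X}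
    (i j : P ⟶ Q) (s : H.obj (op Q)) : H.map i.op s = H.map j.op s := by
  rw [Subsingleton.elim i j]

private lemma aux_hom_eq' (H : TopCat.Presheaf AddCommGrpCat.{0} X) {P Q : (Opens ↑X)ᵒᵖ}
    (i j : P ⟶ Q) (s : H.obj P) : H.map i s = H.map j s := by
  rw [Subsingleton.elim i j]

private lemma aux_res_res_s2 (H : TopCat.Presheaf AddCommGrpCat.{0} X) {P Q R : Opens ↑X}
    (hPQ : P ≤ Q) (hQR : Q ≤ R) (s : H.obj (op R)) :
    H.map (homOfLE hPQ).op (H.map (homOfLE hQR).op s)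
      = H.map (homOfLE (hPQ.trans hQR)).op s := by
  rw [← comp_apply, ← Functor.map_comp]
  rfl

private lemma aux_natur {F G : TopCat.Sheaf AddCommGrpCat.{0} X} (φ : F ⟶ G)
    {V W : Opens ↑X} (h : V ≤ W) (s : F.val.obj (op W)) :
    φ.hom.app (op V) (F.val.map (homOfLE h).op s)
      = G.val.map (homOfLE h).op (φ.hom.app (op W) s) := by
  rw [← comp_apply, ← comp_apply, φ.hom.naturality]

private lemma aux_bot (H : TopCat.Sheaf AddCommGrpCat.{0} X)
    (s t : H.val.obj (op ⊥)) : s = t := by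
  apply H.eq_of_locally_eq' (fun i : PEmpty.{1} => ⊥) ⊥ (fun i => i.elim)
  · simp
  · intro i; exact i.elim

private lemma aux_glue2 (H : TopCat.Sheaf AddCommGrpCat.{0} X) {A B : Opens ↑X}
    (sA : H.val.obj (op A)) (sB : H.val.obj (op B))
    (h : H.val.map (homOfLE (inf_le_left : A ⊓ B ≤ A)).op sA
        = H.val.map (homOfLE (inf_le_right : A ⊓ B ≤ B)).op sB) :
    ∃ s : H.val.obj (op (A ⊔ B)),
      H.val.map (homOfLE (le_sup_left : A ≤ A ⊔ B)).op s = sA ∧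
      H.val.map (homOfLE (le_sup_right : B ≤ A ⊔ B)).op s = sB := by
  have h2 : ∀ {D : Opens ↑X} (hA : D ≤ A) (hB : D ≤ B),
      H.val.map (homOfLE hA).op sA = H.val.map (homOfLE hB).op sB := by
    intro D hA hB
    calc H.val.map (homOfLE hA).op sA
        = H.val.map (homOfLE (le_inf hA hB)).op
            (H.val.map (homOfLE (inf_le_left : A ⊓ B ≤ A)).op sA) :=
          (aux_res_res_s2 H.val _ _ _).symm
      _ = H.val.map (homOfLE (le_inf hA hB)).op
            (H.val.map (homOfLE (inf_le_right : A ⊓ B ≤ B)).op sB) := by rw [h]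
      _ = H.val.map (homOfLE hB).op sB := aux_res_res_s2 H.val _ _ _
  set c : Bool → Opens ↑X := fun b => bif b then A else B with hc
  have hcov : A ⊔ B ≤ iSup c := sup_le (le_iSup c true) (le_iSup c false)
  set sf : ∀ b, H.val.obj (op (c b)) :=
    fun b => Bool.rec (motive := fun b => H.val.obj (op (c b))) sB sA b with hsf
  have hcompat : TopCat.Presheaf.IsCompatible H.val c sf := by
    intro i j
    cases i <;> cases j
    · exact aux_hom_eq_s2 H.val _ _ _
    · show H.val.map (homOfLE (inf_le_left : B ⊓ A ≤ B)).op sB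
          = H.val.map (homOfLE (inf_le_right : B ⊓ A ≤ A)).op sA
      exact (h2 (inf_le_right : B ⊓ A ≤ A) (inf_le_left : B ⊓ A ≤ B)).symm
    · show H.val.map (homOfLE (inf_le_left : A ⊓ B ≤ A)).op sA
          = H.val.map (homOfLE (inf_le_right : A ⊓ B ≤ B)).op sB
      exact h2 _ _
    · exact aux_hom_eq_s2 H.val _ _ _
  obtain ⟨s, hs, -⟩ := H.existsUnique_gluing' c (A ⊔ B)
    (fun b => homOfLE (by cases b <;> simp [hc])) hcov sf hcompat
  exact ⟨s, hs true, hs false⟩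

private lemma aux_step {K F G : TopCat.Sheaf AddCommGrpCat.{0} X} (ι : K ⟶ F) (φ : F ⟶ G)
    (hker : ∀ (W : Opens ↑X) (s : F.val.obj (op W)),
      φ.hom.app (op W) s = 0 ↔ ∃ t, ι.hom.app (op W) t = s)
    {U A B : Opens ↑X} (hAU : A ≤ U) (hBU : B ≤ U)
    (hfl : Function.Surjective (K.val.map (homOfLE (inf_le_right : A ⊓ B ≤ B)).op))
    (g : G.val.obj (op U)) (s : F.val.obj (op A)) (fB : F.val.obj (op B))
    (hs : φ.hom.app (op A) s = G.val.map (homOfLE hAU).op g)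
    (hfB : φ.hom.app (op B) fB = G.val.map (homOfLE hBU).op g) :
    ∃ s' : F.val.obj (op (A ⊔ B)),
      φ.hom.app (op (A ⊔ B)) s' = G.val.map (homOfLE (sup_le hAU hBU)).op g ∧
      F.val.map (homOfLE (le_sup_left : A ≤ A ⊔ B)).op s' = s := by
  have hd0 : φ.hom.app (op (A ⊓ B))
      (F.val.map (homOfLE (inf_le_left : A ⊓ B ≤ A)).op s -
       F.val.map (homOfLE (inf_le_right : A ⊓ B ≤ B)).op fB) = 0 := by
    rw [map_sub, aux_natur φ, aux_natur φ, hs, hfB, aux_res_res_s2 G.val, aux_res_res_s2 G.val,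
      aux_hom_eq_s2 G.val (homOfLE ((inf_le_left : A ⊓ B ≤ A).trans hAU))
        (homOfLE ((inf_le_right : A ⊓ B ≤ B).trans hBU)), sub_self]
  obtain ⟨k, hk⟩ := (hker _ _).mp hd0
  obtain ⟨k', hk'⟩ := hfl k
  have h0 : φ.hom.app (op B) (ι.hom.app (op B) k') = 0 := (hker B _).mpr ⟨k', rfl⟩
  have hf'g : φ.hom.app (op B) (fB + ι.hom.app (op B) k')
      = G.val.map (homOfLE hBU).op g := by
    rw [map_add, h0, add_zero, hfB]
  have hnat : F.val.map (homOfLE (inf_le_right : A ⊓ B ≤ B)).op (ι.hom.app (op B) k')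
      = ι.hom.app (op (A ⊓ B)) k := by
    rw [← comp_apply, ← ι.hom.naturality, comp_apply, hk']
  have hagree : F.val.map (homOfLE (inf_le_left : A ⊓ B ≤ A)).op s
      = F.val.map (homOfLE (inf_le_right : A ⊓ B ≤ B)).op (fB + ι.hom.app (op B) k') := by
    rw [map_add, hnat, hk]
    abel
  obtain ⟨s', hs'A, hs'B⟩ := aux_glue2 F s (fB + ι.hom.app (op B) k') hagree
  refine ⟨s', ?_, hs'A⟩
  apply TopCat.Sheaf.eq_of_locally_eq₂ G
    (homOfLE (le_sup_left : A ≤ A ⊔ B)) (homOfLE (le_sup_right : B ≤ A ⊔ B)) le_rfl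
  · have l1 : G.val.map (homOfLE (le_sup_left : A ≤ A ⊔ B)).op
        (φ.hom.app (op (A ⊔ B)) s') = G.val.map (homOfLE hAU).op g := by
      rw [← aux_natur φ, hs'A, hs]
    rw [l1, aux_res_res_s2 G.val]
  · have l2 : G.val.map (homOfLE (le_sup_right : B ≤ A ⊔ B)).op
        (φ.hom.app (op (A ⊔ B)) s') = G.val.map (homOfLE hBU).op g := by
      rw [← aux_natur φ, hs'B, hf'g]
    rw [l2, aux_res_res_s2 G.val]

end Aux

theorem stmt2 {X : TopCat.{0}}
    (K F G : TopCat.Sheaf AddCommGrpCat.{0} X) (ι : K ⟶ F) (φ : F ⟶ G)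
    -- φ is surjective (on stalks):
    (hsurj : ∀ x : ↑X,
      Function.Surjective ((TopCat.Presheaf.stalkFunctor AddCommGrpCat x).map φ.hom))
    -- K is the kernel of φ (kernels of sheaf morphisms are computed sectionwise):
    (hker_inj : ∀ W : Opens X, Function.Injective (ι.hom.app (op W)))
    (hker : ∀ (W : Opens X) (s : F.val.obj (op W)),
      φ.hom.app (op W) s = 0 ↔ ∃ t, ι.hom.app (op W) t = s)
    -- U is an open Lindelöf subset:
    (U : Opens X) (hU : LindelofSet U.carrier)
    -- K is flabby relative to U:
    (hflabby : ∀ (V W : Opens X) (h : V ≤ W), W ≤ U →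
      Function.Surjective (K.val.map (homOfLE h).op)) :
    Function.Surjective (φ.hom.app (op U)) := by
  intro g
  by_cases hne : (U : Set X).Nonempty
  swap
  · -- U is empty
    have hUb : U = ⊥ := by
      ext x
      simp only [Set.not_nonempty_iff_eq_empty] at hne
      simp [← SetLike.mem_coe, hne]
    subst hUb
    exact ⟨0, aux_bot G _ _⟩
  -- local lifts
  have loc : ∀ x : X, x ∈ U → ∃ (V : Opens X), x ∈ V ∧ ∃ (hVU : V ≤ U),
      ∃ f : F.val.obj (op V), φ.hom.app (op V) f = G.val.map (homOfLE hVU).op g := by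
    intro x hx
    obtain ⟨t, ht⟩ := hsurj x (TopCat.Presheaf.germ G.val U x hx g)
    obtain ⟨V₀, hxV₀, f₀, rfl⟩ := TopCat.Presheaf.germ_exist F.val (x := x) t
    rw [TopCat.Presheaf.stalkFunctor_map_germ_apply] at ht
    obtain ⟨W, hxW, iU', iV', heq⟩ := TopCat.Presheaf.germ_eq G.val x hxV₀ hx _ _ ht
    refine ⟨W, hxW, iV'.le, F.val.map iU'.op f₀, ?_⟩
    rw [← comp_apply, φ.hom.naturality, comp_apply, heq]
    congr 1
  choose Vl hxVl hVlU fl hfl using loc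
  -- Lindelöf: countable subcover
  set 𝒰 : Set (Set X) := {v | ∃ (x : X) (hx : x ∈ U), v = ↑(Vl x hx)} with h𝒰
  obtain ⟨𝒱, h𝒱𝒰, hcount, hcover⟩ := hU 𝒰
    (by rintro u ⟨x, hx, rfl⟩; exact (Vl x hx).2)
    (fun x hx => Set.mem_sUnion.mpr ⟨Vl x hx, ⟨x, hx, rfl⟩, hxVl x hx⟩)
  have h𝒱ne : 𝒱.Nonempty := by
    obtain ⟨x, hx⟩ := hne
    obtain ⟨v, hv, -⟩ := Set.mem_sUnion.mp (hcover hx)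
    exact ⟨v, hv⟩
  obtain ⟨e, he⟩ := hcount.exists_eq_range h𝒱ne
  have hen : ∀ n : ℕ, ∃ (x : X) (hx : x ∈ U), e n = ↑(Vl x hx) := by
    intro n
    exact h𝒱𝒰 (he ▸ Set.mem_range_self n)
  choose xv hxv hev using hen
  set Vn : ℕ → Opens X := fun n => Vl (xv n) (hxv n) with hVn
  set fn : ∀ n, F.val.obj (op (Vn n)) := fun n => fl (xv n) (hxv n) with hfndef
  have hVnU : ∀ n, Vn n ≤ U := fun n => hVlU (xv n) (hxv n)
  have hfn : ∀ n, φ.hom.app (op (Vn n)) (fn n) = G.val.map (homOfLE (hVnU n)).op g :=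
    fun n => hfl (xv n) (hxv n)
  have hcovV : U ≤ ⨆ n, Vn n := by
    intro x hx
    obtain ⟨v, hv, hxv'⟩ := Set.mem_sUnion.mp (hcover hx)
    obtain ⟨n, rfl⟩ := he ▸ hv
    rw [hev n] at hxv'
    exact Opens.mem_iSup.mpr ⟨n, hxv'⟩
  -- increasing chain of opens
  set Wn : ℕ → Opens X := fun n => Nat.rec (Vn 0) (fun n w => w ⊔ Vn (n + 1)) n with hWn
  have hWsucc : ∀ n, Wn (n + 1) = Wn n ⊔ Vn (n + 1) := fun n => rfl
  have hWU : ∀ n, Wn n ≤ U := by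
    intro n
    induction n with
    | zero => exact hVnU 0
    | succ n ih => exact sup_le ih (hVnU (n + 1))
  have hVW : ∀ n, Vn n ≤ Wn n := by
    intro n
    cases n with
    | zero => exact le_rfl
    | succ n => exact le_sup_right
  have hWmono : ∀ {m n : ℕ}, m ≤ n → Wn m ≤ Wn n := by
    intro m n h
    induction h with
    | refl => exact le_rfl
    | step h ih => exact ih.trans le_sup_left
  have hcovW : U ≤ ⨆ n, Wn n :=
    hcovV.trans (iSup_le fun n => (hVW n).trans (le_iSup Wn n))
  -- the inductive step
  have step : ∀ (n : ℕ) (s : F.val.obj (op (Wn n))),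
      φ.hom.app (op (Wn n)) s = G.val.map (homOfLE (hWU n)).op g →
      ∃ s' : F.val.obj (op (Wn (n + 1))),
        φ.hom.app (op (Wn (n + 1))) s' = G.val.map (homOfLE (hWU (n + 1))).op g ∧
        F.val.map (homOfLE (le_sup_left : Wn n ≤ Wn n ⊔ Vn (n + 1))).op s' = s := by
    intro n s hs
    obtain ⟨s', h1, h2⟩ := aux_step ι φ hker (hWU n) (hVnU (n + 1))
      (hflabby _ _ inf_le_right (hVnU (n + 1))) g s (fn (n + 1)) hs (hfn (n + 1))
    exact ⟨s', h1.trans (aux_hom_eq_s2 G.val _ _ _), h2⟩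
  -- build the chain of sections
  set T : ∀ n : ℕ, {s : F.val.obj (op (Wn n)) //
      φ.hom.app (op (Wn n)) s = G.val.map (homOfLE (hWU n)).op g} :=
    fun n => Nat.rec ⟨fn 0, hfn 0⟩
      (fun n p => ⟨(step n p.1 p.2).choose, (step n p.1 p.2).choose_spec.1⟩) n with hT
  have hTsucc : ∀ n, F.val.map (homOfLE (le_sup_left : Wn n ≤ Wn n ⊔ Vn (n + 1))).op
      (T (n + 1)).1 = (T n).1 :=
    fun n => (step n (T n).1 (T n).2).choose_spec.2
  have hTmn : ∀ (m n : ℕ) (h : m ≤ n),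
      F.val.map (homOfLE (hWmono h)).op (T n).1 = (T m).1 := by
    intro m n h
    induction h with
    | refl =>
      rw [aux_hom_eq_s2 F.val (homOfLE (hWmono le_rfl)) (𝟙 (Wn m)), op_id, F.val.map_id]
      exact id_apply _
    | @step n h ih =>
      rw [← ih, ← hTsucc n, aux_res_res_s2 F.val]
  -- glue the chain
  have hcompatW : TopCat.Presheaf.IsCompatible F.val Wn (fun n => (T n).1) := by
    intro i j
    dsimp only
    rcases le_total i j with h | h
    · rw [← hTmn i j h, ← comp_apply, ← Functor.map_comp]
      exact aux_hom_eq' F.val _ _ _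
    · rw [← hTmn j i h, ← comp_apply, ← Functor.map_comp]
      exact aux_hom_eq' F.val _ _ _
  obtain ⟨s, hs, -⟩ := F.existsUnique_gluing' Wn U
    (fun n => homOfLE (hWU n)) hcovW (fun n => (T n).1) hcompatW
  refine ⟨s, ?_⟩
  apply G.eq_of_locally_eq' Wn U (fun n => homOfLE (hWU n)) hcovW
  intro n
  rw [← comp_apply, ← φ.hom.naturality, comp_apply, hs n, (T n).2]
end
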